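/- Let (M,d) be a metric space equipped with a Borel measure μ whose topological support is all of M. Let (k_t)_{t>0} be a family of continuous functions k_t : M × M → [0,∞) satisfying: (i) symmetry, k_t(x,y) = k_t(y,x) for all x,y and t > 0; (ii) the semigroup (Chapman–Kolmogorov) property, k_{s+t}(x,y) = ∫_M k_s(x,z)·k_t(z,y) dμ(z) for all s,t > 0 and x,y ∈ M; (iii) each section k_t(x,·) is square-integrable with respect to μ; and (iv) the approximate-identity property: for every bounded continuous g : M → ℝ and every x ∈ M, ∫_M k_t(x,y)·g(y) dμ(y) → g(x) as t → 0⁺. If for some T > 0 and x₁, x₂ ∈ M one has k_T(x₁,y) = k_T(x₂,y) for all y ∈ M, then x₁ = x₂. -/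

import Mathlib

open MeasureTheory Filter

private lemma integrable_mul_of_memL2' {M : Type*} [MeasurableSpace M] {μ : Measure M}
    {f g : M → ℝ} (hf : MemLp f 2 μ) (hg : MemLp g 2 μ) :
    Integrable (fun z => f z * g z) μ := by
  have h : (1 : ENNReal) / 1 = 1 / 2 + 1 / 2 := by
    rw [ENNReal.div_add_div_same]; simp; rw [one_add_one_eq_two, ENNReal.div_self (by norm_num) (by norm_num)]
  have h2 := hf.smul (r := 1) hg
  rw [memLp_one_iff_integrable] at h2
  exact h2.congr (Filter.Eventually.of_forall fun z => by
    simp [Pi.smul_apply, smul_eq_mul, mul_comm])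

/-- An abstract heat-kernel family (symmetric, semigroup property, square-integrable
sections, approximate identity) on a metric measure space whose measure has full
topological support separates points: equal kernel sections at a fixed time force the
centers to coincide. -/
theorem stmt_4
    {M : Type*} [MetricSpace M] [MeasurableSpace M] [BorelSpace M] (μ : Measure M)
    (hsupp : ∀ (x : M) (ε : ℝ), 0 < ε → 0 < μ (Metric.ball x ε))
    (k : ℝ → M → M → ℝ)
    (hcont : ∀ t : ℝ, 0 < t → Continuous (Function.uncurry (k t)))
    (hnonneg : ∀ (t : ℝ), 0 < t → ∀ x y : M, 0 ≤ k t x y)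
    (hsymm : ∀ (t : ℝ), 0 < t → ∀ x y : M, k t x y = k t y x)
    (hsemi : ∀ (s t : ℝ), 0 < s → 0 < t → ∀ x y : M,
      k (s + t) x y = ∫ z, k s x z * k t z y ∂μ)
    (hL2 : ∀ (t : ℝ), 0 < t → ∀ x : M, MemLp (k t x) 2 μ)
    (happrox : ∀ g : M → ℝ, Continuous g → (∃ C : ℝ, ∀ x : M, |g x| ≤ C) →
      ∀ x : M, Tendsto (fun t : ℝ => ∫ y, k t x y * g y ∂μ)
        (nhdsWithin 0 (Set.Ioi 0)) (nhds (g x)))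
    (T : ℝ) (hT : 0 < T) (x₁ x₂ : M)
    (hker : ∀ y : M, k T x₁ y = k T x₂ y) :
    x₁ = x₂ := by
  haveI : μ.IsOpenPosMeasure := by
    refine ⟨fun U hU hne => ?_⟩
    obtain ⟨x, hx⟩ := hne
    obtain ⟨ε, hε, hball⟩ := Metric.isOpen_iff.1 hU x hx
    exact fun h => (hsupp x ε hε).ne' (le_antisymm (h ▸ measure_mono hball) zero_le)
  -- continuity of sections
  have hsec : ∀ (t : ℝ), 0 < t → ∀ x : M, Continuous (fun z => k t x z) := by
    intro t ht x
    exact (hcont t ht).comp (continuous_const.prodMk continuous_id)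
  -- halving lemma
  have half : ∀ (t : ℝ), 0 < t → (∀ y, k t x₁ y = k t x₂ y) →
      ∀ y, k (t / 2) x₁ y = k (t / 2) x₂ y := by
    intro t ht h
    have ht2 : (0:ℝ) < t / 2 := by linarith
    set a : M → ℝ := k (t / 2) x₁ with ha_def
    set b : M → ℝ := k (t / 2) x₂ with hb_def
    have hLa := hL2 (t / 2) ht2 x₁
    have hLb := hL2 (t / 2) ht2 x₂
    have hiaa : Integrable (fun z => a z * a z) μ := integrable_mul_of_memL2' hLa hLa
    have hiab : Integrable (fun z => a z * b z) μ := integrable_mul_of_memL2' hLa hLb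
    have hibb : Integrable (fun z => b z * b z) μ := integrable_mul_of_memL2' hLb hLb
    have key : ∀ u v : M, k t u v = ∫ z, k (t/2) u z * k (t/2) v z ∂μ := by
      intro u v
      have := hsemi (t/2) (t/2) ht2 ht2 u v
      rw [show t/2 + t/2 = t by ring] at this
      rw [this]
      refine integral_congr_ae (Filter.Eventually.of_forall fun z => ?_)
      dsimp only
      rw [hsymm (t/2) ht2 z v]
    have haa : ∫ z, a z * a z ∂μ = k t x₁ x₁ := (key x₁ x₁).symm
    have hab : ∫ z, a z * b z ∂μ = k t x₁ x₂ := (key x₁ x₂).symm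
    have hbb : ∫ z, b z * b z ∂μ = k t x₂ x₂ := (key x₂ x₂).symm
    have hzero : ∫ z, (a z - b z) ^ 2 ∂μ = 0 := by
      have expand : ∀ z, (a z - b z) ^ 2 = a z * a z - 2 * (a z * b z) + b z * b z := by
        intro z; ring
      rw [integral_congr_ae (Filter.Eventually.of_forall expand)]
      have e1 : ∫ z, (a z * a z - 2 * (a z * b z) + b z * b z) ∂μ
          = (∫ z, (a z * a z - 2 * (a z * b z)) ∂μ) + ∫ z, b z * b z ∂μ :=
        integral_add (hiaa.sub (hiab.const_mul 2)) hibb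
      have e2 : ∫ z, (a z * a z - 2 * (a z * b z)) ∂μ
          = (∫ z, a z * a z ∂μ) - ∫ z, 2 * (a z * b z) ∂μ :=
        integral_sub hiaa (hiab.const_mul 2)
      rw [e1, e2, integral_const_mul, haa, hab, hbb]
      have h1 : k t x₁ x₁ = k t x₁ x₂ := by
        rw [h x₁, hsymm t ht x₂ x₁]
      have h2 : k t x₂ x₂ = k t x₁ x₂ := (h x₂).symm
      rw [h1, h2]; ring
    have hisq : Integrable (fun z => (a z - b z) ^ 2) μ := by
      have : Integrable (fun z => (a z - b z) * (a z - b z)) μ :=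
        integrable_mul_of_memL2' (hLa.sub hLb) (hLa.sub hLb)
      exact this.congr (Filter.Eventually.of_forall fun z => by ring)
    have hsq : (fun z => (a z - b z) ^ 2) =ᵐ[μ] 0 := by
      rw [← integral_eq_zero_iff_of_nonneg (fun z => sq_nonneg _) hisq]
      exact hzero
    have hdiff : (fun z => a z - b z) =ᵐ[μ] 0 := by
      filter_upwards [hsq] with z hz
      have : (a z - b z) ^ 2 = 0 := hz
      have := pow_eq_zero_iff (n := 2) (by norm_num) |>.1 this
      simpa using this
    have hcontd : Continuous (fun z => a z - b z) :=
      (hsec _ ht2 x₁).sub (hsec _ ht2 x₂)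
    have := (Continuous.ae_eq_iff_eq μ hcontd continuous_const).1 hdiff
    intro y
    have hy := congrFun this y
    change a y - b y = 0 at hy
    exact sub_eq_zero.1 hy
  -- iteration
  have iter : ∀ n : ℕ, ∀ y, k (T / 2 ^ n) x₁ y = k (T / 2 ^ n) x₂ y := by
    intro n
    induction n with
    | zero => simpa using hker
    | succ n ih =>
      have hpos : (0:ℝ) < T / 2 ^ n := by positivity
      have := half (T / 2 ^ n) hpos ih
      intro y
      have heq : T / 2 ^ (n + 1) = T / 2 ^ n / 2 := by
        rw [pow_succ, ← div_div]
      rw [heq]; exact this y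
  -- sequence tends to 0 within Ioi 0
  have hseq : Tendsto (fun n : ℕ => T / 2 ^ n) atTop (nhdsWithin 0 (Set.Ioi 0)) := by
    rw [tendsto_nhdsWithin_iff]
    constructor
    · have : Tendsto (fun n : ℕ => T * (1/2 : ℝ) ^ n) atTop (nhds (T * 0)) :=
        (tendsto_pow_atTop_nhds_zero_of_lt_one (by norm_num) (by norm_num)).const_mul T
      simpa [div_eq_mul_inv, mul_comm, one_div, inv_pow] using this
    · exact Filter.Eventually.of_forall fun n => by
        simp only [Set.mem_Ioi]; positivity
  -- use approximate identity with a separating function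
  set g : M → ℝ := fun y => min (dist y x₂) 1 with hg_def
  have hgcont : Continuous g := (continuous_id.dist continuous_const).min continuous_const
  have hgbd : ∃ C : ℝ, ∀ x : M, |g x| ≤ C := by
    refine ⟨1, fun x => abs_le.2 ⟨?_, min_le_right _ _⟩⟩
    have : (0:ℝ) ≤ g x := le_min dist_nonneg (by norm_num)
    linarith
  have h1 := (happrox g hgcont hgbd x₁).comp hseq
  have h2 := (happrox g hgcont hgbd x₂).comp hseq
  have heqfun : (fun n : ℕ => ∫ y, k (T / 2 ^ n) x₁ y * g y ∂μ) =
      (fun n : ℕ => ∫ y, k (T / 2 ^ n) x₂ y * g y ∂μ) := by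
    funext n
    exact integral_congr_ae (Filter.Eventually.of_forall fun y => by dsimp only; rw [iter n y])
  have hgg : g x₁ = g x₂ := by
    refine tendsto_nhds_unique h1 ?_
    rw [show ((fun t : ℝ => ∫ y, k t x₁ y * g y ∂μ) ∘ fun n : ℕ => T / 2 ^ n)
        = (fun n : ℕ => ∫ y, k (T / 2 ^ n) x₁ y * g y ∂μ) from rfl, heqfun]
    exact h2
  have hgx₂ : g x₂ = 0 := by simp [hg_def]
  rw [hgx₂] at hgg
  have hd : dist x₁ x₂ = 0 := by
    by_contra hne
    have hpos : 0 < dist x₁ x₂ := lt_of_le_of_ne dist_nonneg (Ne.symm hne)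
    have : 0 < g x₁ := lt_min hpos (by norm_num)
    linarith [hgg]
  exact dist_eq_zero.1 hd
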